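/- The set of continuous paths a : [0,1] → [0,1] generated under the c-space operations (constants at endpoints, concatenation, surjective increasing reparametrisation) by the increasing maps [0,1] → [0,1] and the reversion r(t) = 1 − t equals the set of paths of the growing-siphon interval; in particular, every controlled path of c_S𝕀 is piecewise monotone, and on any subinterval where it is decreasing it decreases from 1 to 0. -/
import Mathlib


open unitInterval Set

noncomputable def conc {X : Type*} (a b : I → X) : I → X := fun t =>
  if h : (t : ℝ) ≤ 1 / 2 then
    a ⟨2 * (t : ℝ), by constructor <;> nlinarith [t.2.1, t.2.2]⟩
  else
    b ⟨2 * (t : ℝ) - 1, by have h' := not_le.mp h; constructor <;> nlinarith [t.2.1, t.2.2]⟩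

structure IsCStructure {X : Type*} [TopologicalSpace X] (S : Set (I → X)) : Prop where
  cont : ∀ a ∈ S, Continuous a
  const_src : ∀ a ∈ S, (fun _ : I => a 0) ∈ S
  const_tgt : ∀ a ∈ S, (fun _ : I => a 1) ∈ S
  concat : ∀ a ∈ S, ∀ b ∈ S, a 1 = b 0 → conc a b ∈ S
  reparam : ∀ a ∈ S, ∀ ρ : I → I, Continuous ρ → Monotone ρ → Function.Surjective ρ → a ∘ ρ ∈ S

structure IsDStructure {X : Type*} [TopologicalSpace X] (S : Set (I → X)) : Prop where
  cont : ∀ a ∈ S, Continuous a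
  const : ∀ x : X, (fun _ : I => x) ∈ S
  concat : ∀ a ∈ S, ∀ b ∈ S, a 1 = b 0 → conc a b ∈ S
  reparam : ∀ a ∈ S, ∀ ρ : I → I, Continuous ρ → Monotone ρ → a ∘ ρ ∈ S

def IsFlexible {X : Type*} [TopologicalSpace X] (S : Set (I → X)) (a : I → X) : Prop :=
  a ∈ S ∧ ∀ (t₁ t₂ : ℝ) (h0 : 0 ≤ t₁) (h12 : t₁ < t₂) (h1 : t₂ ≤ 1),
    (fun t : I => a ⟨(t₂ - t₁) * (t : ℝ) + t₁, by
      constructor <;>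
        nlinarith [t.2.1, t.2.2, mul_nonneg (sub_nonneg.mpr h12.le) t.2.1,
          mul_le_of_le_one_right (sub_nonneg.mpr h12.le) t.2.2]⟩) ∈ S


noncomputable def pr (x : ℝ) : I := Set.projIcc 0 1 one_pos.le x

lemma pr_coe {x : ℝ} (h0 : 0 ≤ x) (h1 : x ≤ 1) : ((pr x : I) : ℝ) = x := by
  simp [pr, Set.projIcc_of_mem one_pos.le ⟨h0, h1⟩]

lemma pr_val (t : I) : pr ((t : I) : ℝ) = t := by
  simp [pr, Set.projIcc_of_mem one_pos.le t.2]

lemma pr_cont : Continuous pr := by unfold pr; exact continuous_projIcc (h := one_pos.le)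
lemma pr_mono : Monotone pr := fun x y h => monotone_projIcc one_pos.le h

lemma app_eq' {X : Type*} (f : I → X) {x : ℝ} {px : x ∈ I} (s : I) (h : x = (s : ℝ)) :
    f ⟨x, px⟩ = f s := congrArg f (Subtype.ext h)

lemma surj_of_cont (f : I → I) (hc : Continuous f) (h0 : f 0 = 0) (h1 : f 1 = 1) :
    Function.Surjective f := by
  intro y
  set g : ℝ → I := fun x => f (pr x) with hg
  have hg0 : g 0 = 0 := by
    rw [hg]; simp only []
    rw [show pr (0:ℝ) = 0 from Subtype.ext (by rw [pr_coe le_rfl zero_le_one]; norm_num), h0]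
  have hg1 : g 1 = 1 := by
    rw [hg]; simp only []
    rw [show pr (1:ℝ) = 1 from Subtype.ext (by rw [pr_coe zero_le_one le_rfl]; norm_num), h1]
  have hy : y ∈ Icc (g 0) (g 1) := by
    rw [hg0, hg1]
    exact ⟨Subtype.coe_le_coe.mp (by simpa using y.2.1),
      Subtype.coe_le_coe.mp (by simpa using y.2.2)⟩
  obtain ⟨x, hx, hfx⟩ := intermediate_value_Icc zero_le_one
    ((hc.comp pr_cont).continuousOn) hy
  exact ⟨pr x, hfx⟩

lemma u_mono {n : ℕ} {u : ℕ → ℝ} (hu : ∀ i < n, u i < u (i+1)) :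
    ∀ {i j}, i ≤ j → j ≤ n → u i ≤ u j := by
  intro i j hij hjn
  induction j with
  | zero => have : i = 0 := Nat.le_zero.mp hij; simp [this]
  | succ m ih =>
    rcases Nat.lt_or_ge i (m+1) with h | h
    · exact le_trans (ih (Nat.lt_succ_iff.mp h) (by omega)) (hu m (by omega)).le
    · have : i = m+1 := le_antisymm hij h
      simp [this]

lemma u_strict {n : ℕ} {u : ℕ → ℝ} (hu : ∀ i < n, u i < u (i+1)) :
    ∀ {i j}, i < j → j ≤ n → u i < u j := by
  intro i j hij hjn
  cases j with
  | zero => omega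
  | succ m =>
    exact lt_of_le_of_lt (u_mono hu (Nat.lt_succ_iff.mp hij) (by omega)) (hu m (by omega))

lemma u_nonneg {n : ℕ} {u : ℕ → ℝ} (hu : ∀ i < n, u i < u (i+1)) (h0 : u 0 = 0)
    {i : ℕ} (hi : i ≤ n) : 0 ≤ u i := h0 ▸ u_mono hu (Nat.zero_le i) hi

lemma u_le_one {n : ℕ} {u : ℕ → ℝ} (hu : ∀ i < n, u i < u (i+1)) (h1 : u n = 1)
    {i : ℕ} (hi : i ≤ n) : u i ≤ 1 := h1 ▸ u_mono hu hi le_rfl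

lemma conc_left {X : Type*} (a b : I → X) {t : I} (h : (t:ℝ) ≤ 1/2) :
    conc a b t = a ⟨2 * (t:ℝ), by constructor <;> nlinarith [t.2.1, t.2.2]⟩ := dif_pos h

lemma conc_right {X : Type*} (a b : I → X) (hab : a 1 = b 0) {t : I} (h : 1/2 ≤ (t:ℝ)) :
    conc a b t = b ⟨2 * (t:ℝ) - 1, by constructor <;> nlinarith [t.2.1, t.2.2, h]⟩ := by
  by_cases h2 : (t:ℝ) ≤ 1/2
  · have ht : (t:ℝ) = 1/2 := le_antisymm h2 h
    have e1 : a ⟨2 * (t:ℝ), by constructor <;> nlinarith [t.2.1, t.2.2]⟩ = a 1 :=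
      app_eq' a 1 (by rw [ht]; norm_num)
    rw [conc, dif_pos h2, e1, hab]
    exact (app_eq' b 0 (by rw [ht]; norm_num)).symm
  · rw [conc, dif_neg h2]

lemma conc_continuous {X : Type*} [TopologicalSpace X] {a b : I → X}
    (ha : Continuous a) (hb : Continuous b) (hab : a 1 = b 0) :
    Continuous (conc a b) := by
  have heq : conc a b = fun t : I =>
      if (t:ℝ) ≤ 1/2 then a (pr (2 * (t:ℝ))) else b (pr (2 * (t:ℝ) - 1)) := by
    funext t
    by_cases h : (t:ℝ) ≤ 1/2
    · rw [conc_left a b h, if_pos h]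
      exact app_eq' a _ (by rw [pr_coe (by nlinarith [t.2.1]) (by nlinarith)])
    · rw [conc_right a b hab (le_of_not_ge h), if_neg h]
      exact app_eq' b _
        (by rw [pr_coe (by push_neg at h; nlinarith) (by nlinarith [t.2.2])])
  rw [heq]
  apply Continuous.if_le
  · exact ha.comp (pr_cont.comp (by continuity))
  · exact hb.comp (pr_cont.comp (by continuity))
  · exact continuous_subtype_val
  · exact continuous_const
  · intro t ht
    have e1 : pr (2 * (t:ℝ)) = 1 := by
      apply Subtype.ext; rw [pr_coe (by nlinarith [t.2.1]) (by rw [ht]; norm_num)]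
      rw [ht]; norm_num
    have e2 : pr (2 * (t:ℝ) - 1) = 0 := by
      apply Subtype.ext; rw [pr_coe (by rw [ht]; norm_num) (by nlinarith [t.2.2])]
      rw [ht]; norm_num
    rw [e1, e2, hab]

lemma step {S : Set (I → I)} (hC : IsCStructure S) (a : I → I) {p q : ℝ}
    (hp : 0 < p) (hpq : p < q) (hq : q ≤ 1)
    (hf : (fun t : I => a (pr (p * (t:ℝ)))) ∈ S)
    (hg : (fun t : I => a (pr ((q - p) * (t:ℝ) + p))) ∈ S) :
    (fun t : I => a (pr (q * (t:ℝ)))) ∈ S := by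
  have hq0 : 0 < q := lt_trans hp hpq
  set f : I → I := fun t : I => a (pr (p * (t:ℝ))) with hfd
  set g : I → I := fun t : I => a (pr ((q - p) * (t:ℝ) + p)) with hgd
  have hend : f 1 = g 0 := by
    rw [hfd, hgd]
    show a (pr (p * (((1:I)):ℝ))) = a (pr ((q - p) * (((0:I)):ℝ) + p))
    norm_num
  have hcat := hC.concat f hf g hg hend
  set ψ : I → I := fun s : I => if q * (s:ℝ) ≤ p then pr (q * (s:ℝ) / (2 * p))
    else pr (1/2 + (q * (s:ℝ) - p) / (2 * (q - p))) with hψd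
  have ψc : Continuous ψ := by
    rw [hψd]
    apply Continuous.if_le
    · exact pr_cont.comp (by continuity)
    · exact pr_cont.comp (by continuity)
    · exact by continuity
    · exact continuous_const
    · intro s hs
      rw [hs]
      congr 1
      rw [sub_self, zero_div, add_zero, div_eq_iff (by positivity)]
      ring
  have ψm : Monotone ψ := by
    intro s t hst
    have hst' : (s:ℝ) ≤ (t:ℝ) := hst
    have hmul : q * (s:ℝ) ≤ q * (t:ℝ) := by nlinarith
    rw [hψd]
    simp only []
    by_cases hs : q * (s:ℝ) ≤ p <;> by_cases ht : q * (t:ℝ) ≤ p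
    · rw [if_pos hs, if_pos ht]
      apply pr_mono
      rw [div_le_div_iff₀ (by positivity) (by positivity)]
      nlinarith
    · rw [if_pos hs, if_neg ht]
      apply pr_mono
      push_neg at ht
      have hA : q * (s:ℝ) / (2 * p) ≤ 1/2 := by
        rw [div_le_iff₀ (by positivity)]; nlinarith
      have hB : (0:ℝ) ≤ (q * (t:ℝ) - p) / (2 * (q - p)) :=
        div_nonneg (by linarith) (by linarith)
      linarith
    · exact absurd (le_trans hmul ht) hs
    · rw [if_neg hs, if_neg ht]
      apply pr_mono
      have : (q * (s:ℝ) - p) / (2 * (q - p)) ≤ (q * (t:ℝ) - p) / (2 * (q - p)) := by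
        rw [div_le_div_iff₀ (by linarith) (by linarith)]
        nlinarith
      linarith
  have ψ0 : ψ 0 = 0 := by
    rw [hψd]
    show (if q * ((0:I):ℝ) ≤ p then _ else _) = (0:I)
    rw [if_pos (by norm_num; nlinarith)]
    apply Subtype.ext
    rw [pr_coe (by norm_num) (by norm_num)]
    norm_num
  have ψ1 : ψ 1 = 1 := by
    rw [hψd]
    show (if q * ((1:I):ℝ) ≤ p then _ else _) = (1:I)
    rw [if_neg (by norm_num; nlinarith)]
    apply Subtype.ext
    have hvq : 1/2 + (q * ((1:I):ℝ) - p) / (2 * (q - p)) = 1 := by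
      have h1 : ((1:I):ℝ) = 1 := rfl
      have h2 : (q - p) / (2 * (q - p)) = 1/2 := by
        rw [div_eq_iff (by nlinarith : (2:ℝ) * (q - p) ≠ 0)]; ring
      rw [h1, mul_one, h2]; norm_num
    rw [pr_coe (by rw [hvq]; norm_num) (by rw [hvq])]
    rw [hvq]
    norm_num
  have ψs : Function.Surjective ψ := surj_of_cont ψ ψc ψ0 ψ1
  have hrep := hC.reparam _ hcat ψ ψc ψm ψs
  have hfinal : (conc f g) ∘ ψ = fun t : I => a (pr (q * (t:ℝ))) := by
    funext s
    simp only [Function.comp_apply]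
    by_cases hcase : q * (s:ℝ) ≤ p
    · have hψs : ψ s = pr (q * (s:ℝ) / (2 * p)) := by rw [hψd]; exact if_pos hcase
      have hnum : 0 ≤ q * (s:ℝ) := by nlinarith [s.2.1]
      have hhalfb : q * (s:ℝ) / (2 * p) ≤ 1/2 := by
        rw [div_le_iff₀ (by positivity)]; nlinarith
      have hx : ((pr (q * (s:ℝ) / (2 * p)) : I) : ℝ) = q * (s:ℝ) / (2 * p) :=
        pr_coe (by positivity) (by linarith)
      rw [hψs, conc_left f g (by rw [hx]; exact hhalfb)]
      rw [hfd]
      show a (pr (p * (2 * ((pr (q * (s:ℝ) / (2 * p)) : I) : ℝ)))) = a (pr (q * (s:ℝ)))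
      rw [hx]
      have harg : p * (2 * (q * (s:ℝ) / (2 * p))) = q * (s:ℝ) := by
        have hne : p ≠ 0 := hp.ne'
        field_simp
        all_goals ring
      rw [harg]
    · push_neg at hcase
      have hψs : ψ s = pr (1/2 + (q * (s:ℝ) - p) / (2 * (q - p))) := by
        rw [hψd]; exact if_neg (not_le.mpr hcase)
      have hub : (q * (s:ℝ) - p) / (2 * (q - p)) ≤ 1/2 := by
        rw [div_le_iff₀ (by linarith)]
        nlinarith [s.2.2]
      have hlb : (0:ℝ) ≤ (q * (s:ℝ) - p) / (2 * (q - p)) :=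
        div_nonneg (by linarith) (by linarith)
      have hx : ((pr (1/2 + (q * (s:ℝ) - p) / (2 * (q - p))) : I) : ℝ) =
          1/2 + (q * (s:ℝ) - p) / (2 * (q - p)) := pr_coe (by linarith) (by linarith)
      rw [hψs, conc_right f g hend (by rw [hx]; linarith)]
      rw [hgd]
      show a (pr ((q - p) * (2 * ((pr (1/2 + (q * (s:ℝ) - p) / (2 * (q - p))) : I) : ℝ) - 1) + p))
        = a (pr (q * (s:ℝ)))
      rw [hx]
      have harg : (q - p) * (2 * (1/2 + (q * (s:ℝ) - p) / (2 * (q - p))) - 1) + p = q * (s:ℝ) := by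
        have hne : q - p ≠ 0 := sub_ne_zero.mpr (ne_of_gt hpq)
        field_simp
        all_goals ring
      rw [harg]
  rwa [hfinal] at hrep

lemma piece_mem {S : Set (I → I)} (hC : IsCStructure S)
    (hM : {a : I → I | Continuous a ∧ Monotone a} ⊆ S)
    (hr : (unitInterval.symm : I → I) ∈ S)
    (a : I → I) (ha : Continuous a) {p q : ℝ}
    (hp0 : 0 ≤ p) (hpq : p < q) (hq1 : q ≤ 1)
    (hpiece : MonotoneOn a {t : I | p ≤ (t:ℝ) ∧ (t:ℝ) ≤ q} ∨
      (AntitoneOn a {t : I | p ≤ (t:ℝ) ∧ (t:ℝ) ≤ q} ∧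
        (∀ t : I, (t:ℝ) = p → a t = 1) ∧ (∀ t : I, (t:ℝ) = q → a t = 0))) :
    (fun t : I => a (pr ((q - p) * (t:ℝ) + p))) ∈ S := by
  set w : I → I := fun t : I => a (pr ((q - p) * (t:ℝ) + p)) with hwd
  have hmem : ∀ t : I, (q - p) * (t:ℝ) + p ∈ Icc (0:ℝ) 1 := fun t =>
    ⟨by nlinarith [t.2.1], by nlinarith [t.2.2]⟩
  have hcoord : ∀ t : I, ((pr ((q - p) * (t:ℝ) + p) : I) : ℝ) = (q - p) * (t:ℝ) + p :=
    fun t => pr_coe (hmem t).1 (hmem t).2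
  have hset : ∀ t : I, pr ((q - p) * (t:ℝ) + p) ∈ {t : I | p ≤ (t:ℝ) ∧ (t:ℝ) ≤ q} := by
    intro t
    rw [Set.mem_setOf_eq, hcoord t]
    exact ⟨by nlinarith [t.2.1], by nlinarith [t.2.2]⟩
  have hwc : Continuous w := ha.comp (pr_cont.comp (by continuity))
  rcases hpiece with hm | ⟨hanti, hl, hrr⟩
  · apply hM
    refine ⟨hwc, fun s t hst => ?_⟩
    apply hm (hset s) (hset t)
    apply pr_mono
    have hst' : (s:ℝ) ≤ (t:ℝ) := hst
    nlinarith
  · have hw0 : w 0 = 1 := by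
      rw [hwd]
      refine hl _ ?_
      rw [hcoord 0]
      norm_num
    have hw1 : w 1 = 0 := by
      rw [hwd]
      refine hrr _ ?_
      have h1 : ((1:I):ℝ) = 1 := rfl
      rw [hcoord 1, h1]
      ring
    set ρ : I → I := fun t => unitInterval.symm (w t) with hρd
    have hρc : Continuous ρ := unitInterval.continuous_symm.comp hwc
    have hρm : Monotone ρ := by
      intro s t hst
      have hst' : (s:ℝ) ≤ (t:ℝ) := hst
      have hws : w t ≤ w s := by
        refine hanti (hset s) (hset t) (pr_mono ?_)
        nlinarith
      have hc := Subtype.coe_le_coe.mpr hws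
      rw [hρd]
      exact Subtype.coe_le_coe.mp
        (by rw [unitInterval.coe_symm_eq, unitInterval.coe_symm_eq]; linarith)
    have hρ0 : ρ 0 = 0 := by rw [hρd]; show unitInterval.symm (w 0) = 0; rw [hw0, unitInterval.symm_one]
    have hρ1 : ρ 1 = 1 := by rw [hρd]; show unitInterval.symm (w 1) = 1; rw [hw1, unitInterval.symm_zero]
    have hρs : Function.Surjective ρ := surj_of_cont ρ hρc hρ0 hρ1
    have hrep := hC.reparam _ hr ρ hρc hρm hρs
    have hcomp : (unitInterval.symm : I → I) ∘ ρ = w := by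
      funext t
      simp only [Function.comp_apply, hρd]
      exact unitInterval.symm_symm (w t)
    rwa [hcomp] at hrep

lemma dir2 {S : Set (I → I)} (hC : IsCStructure S)
    (hM : {a : I → I | Continuous a ∧ Monotone a} ⊆ S)
    (hr : (unitInterval.symm : I → I) ∈ S)
    (a : I → I) (ha : Continuous a) (n : ℕ) (hn : 0 < n) (u : ℕ → ℝ)
    (h0 : u 0 = 0) (h1 : u n = 1) (hu : ∀ i < n, u i < u (i+1))
    (hp : ∀ i < n, MonotoneOn a {t : I | u i ≤ (t:ℝ) ∧ (t:ℝ) ≤ u (i+1)} ∨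
      (AntitoneOn a {t : I | u i ≤ (t:ℝ) ∧ (t:ℝ) ≤ u (i+1)} ∧
        (∀ t : I, (t:ℝ) = u i → a t = 1) ∧ (∀ t : I, (t:ℝ) = u (i+1) → a t = 0))) :
    a ∈ S := by
  have piece : ∀ i, i < n → (fun t : I => a (pr ((u (i+1) - u i) * (t:ℝ) + u i))) ∈ S := by
    intro i hi
    exact piece_mem hC hM hr a ha (u_nonneg hu h0 hi.le) (hu i hi)
      (u_le_one hu h1 hi) (hp i hi)
  have key : ∀ k, 1 ≤ k → k ≤ n → (fun t : I => a (pr (u k * (t:ℝ)))) ∈ S := by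
    intro k
    induction k with
    | zero => omega
    | succ m ih =>
      intro _ hkn
      rcases Nat.eq_zero_or_pos m with hm | hm
      · subst hm
        have hpm := piece 0 hn
        have he : (fun t : I => a (pr ((u (0+1) - u 0) * (t:ℝ) + u 0))) =
            (fun t : I => a (pr (u (0+1) * (t:ℝ)))) := by
          funext t; congr 1; rw [h0]; ring
        rw [he] at hpm
        exact hpm
      · have hum : 0 < u m := by rw [← h0]; exact u_strict hu hm (by omega)
        exact step hC a hum (hu m (by omega)) (u_le_one hu h1 (by omega))
          (ih hm (by omega)) (piece m (by omega))
  have hkey := key n hn le_rfl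
  have he : (fun t : I => a (pr (u n * (t:ℝ)))) = a := by
    funext t
    rw [h1, one_mul, pr_val]
  rwa [he] at hkey

def Pp : Set (I → I) := {a : I → I | Continuous a ∧ ∃ n : ℕ, 0 < n ∧ ∃ u : ℕ → ℝ,
      u 0 = 0 ∧ u n = 1 ∧ (∀ i < n, u i < u (i + 1)) ∧
      ∀ i < n,
        MonotoneOn a {t : I | u i ≤ (t : ℝ) ∧ (t : ℝ) ≤ u (i + 1)} ∨
        (AntitoneOn a {t : I | u i ≤ (t : ℝ) ∧ (t : ℝ) ≤ u (i + 1)} ∧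
          (∀ t : I, (t : ℝ) = u i → a t = 1) ∧
          (∀ t : I, (t : ℝ) = u (i + 1) → a t = 0))}

lemma mono_mem {a : I → I} (hc : Continuous a) (hm : Monotone a) : a ∈ Pp := by
  refine ⟨hc, 1, one_pos, fun i => (i:ℝ), by norm_num, by norm_num, ?_, ?_⟩
  · intro i _; push_cast; linarith
  · intro i _; exact Or.inl (hm.monotoneOn _)

lemma symm_mem : (unitInterval.symm : I → I) ∈ Pp := by
  refine ⟨unitInterval.continuous_symm, 1, one_pos, fun i => (i:ℝ), by norm_num, by norm_num,
    fun i _ => by push_cast; linarith, ?_⟩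
  intro i hi
  have hi0 : i = 0 := by omega
  subst hi0
  right
  refine ⟨?_, ?_, ?_⟩
  · intro s _ t _ hst
    have hst' : (s:ℝ) ≤ (t:ℝ) := hst
    exact Subtype.coe_le_coe.mp
      (by rw [unitInterval.coe_symm_eq, unitInterval.coe_symm_eq]; linarith)
  · intro t ht
    have h : t = 0 := Subtype.ext (by rw [ht]; norm_num)
    rw [h, unitInterval.symm_zero]
  · intro t ht
    have h : t = 1 := Subtype.ext (by rw [ht]; norm_num)
    rw [h, unitInterval.symm_one]

lemma concat_mem {a b : I → I} (hab : a 1 = b 0) (ha : a ∈ Pp) (hb : b ∈ Pp) :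
    conc a b ∈ Pp := by
  obtain ⟨hac, n, hn, u, hu0, hu1, hu, hpa⟩ := ha
  obtain ⟨hbc, m, hm, v, hv0, hv1, hv, hpb⟩ := hb
  set w : ℕ → ℝ := fun i => if i ≤ n then u i / 2 else (v (i - n) + 1) / 2 with hwd
  have wl : ∀ i, i ≤ n → w i = u i / 2 := by
    intro i hi; simp only [hwd]; rw [if_pos hi]
  have wr : ∀ i, n ≤ i → w i = (v (i - n) + 1) / 2 := by
    intro i hi
    rcases eq_or_lt_of_le hi with h | h
    · subst h
      simp only [hwd]
      rw [if_pos le_rfl, Nat.sub_self, hu1, hv0]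
      norm_num
    · simp only [hwd]; rw [if_neg (by omega)]
  have hone : ∀ t : I, (t:ℝ) ≤ 1/2 → conc a b t = a (pr (2*(t:ℝ))) := by
    intro t ht
    rw [conc_left a b ht]
    exact app_eq' a (pr (2*(t:ℝ))) (pr_coe (by nlinarith [t.2.1]) (by linarith)).symm
  have htwo : ∀ t : I, 1/2 ≤ (t:ℝ) → conc a b t = b (pr (2*(t:ℝ)-1)) := by
    intro t ht
    rw [conc_right a b hab ht]
    exact app_eq' b (pr (2*(t:ℝ)-1)) (pr_coe (by linarith) (by nlinarith [t.2.2])).symm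
  refine ⟨conc_continuous hac hbc hab, n + m, by omega, w, ?_, ?_, ?_, ?_⟩
  · rw [wl 0 (Nat.zero_le n), hu0]; norm_num
  · rw [wr (n + m) (by omega), (by omega : n + m - n = m), hv1]; norm_num
  · intro i hi
    rcases le_or_gt (i+1) n with h | h
    · rw [wl i (by omega), wl (i+1) h]
      have := hu i (by omega)
      linarith
    · rw [wr i (by omega), wr (i+1) (by omega), (by omega : i + 1 - n = (i - n) + 1)]
      have := hv (i - n) (by omega)
      linarith
  · intro i hi
    rcases le_or_gt (i+1) n with h | h
    · rw [wl i (by omega), wl (i+1) h]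
      have hui1 : u (i+1) ≤ 1 := u_le_one hu hu1 h
      have hui0 : 0 ≤ u i := u_nonneg hu hu0 (by omega)
      have huin : u i < u (i+1) := hu i (by omega)
      have hsub : ∀ t : I, t ∈ {t : I | u i / 2 ≤ (t:ℝ) ∧ (t:ℝ) ≤ u (i+1)/2} →
          (t:ℝ) ≤ 1/2 ∧ pr (2*(t:ℝ)) ∈ {t : I | u i ≤ (t:ℝ) ∧ (t:ℝ) ≤ u (i+1)} ∧
          ((pr (2*(t:ℝ)) : I) : ℝ) = 2*(t:ℝ) := by
        rintro t ⟨ht1, ht2⟩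
        have hle : (t:ℝ) ≤ 1/2 := by linarith
        have hco : ((pr (2*(t:ℝ)) : I) : ℝ) = 2*(t:ℝ) :=
          pr_coe (by nlinarith [t.2.1]) (by linarith)
        exact ⟨hle, ⟨by rw [hco]; linarith, by rw [hco]; linarith⟩, hco⟩
      rcases hpa i (by omega) with hmono | ⟨hanti, hL, hR⟩
      · left
        intro s hs t ht hst
        obtain ⟨hs1, hs2, _⟩ := hsub s hs
        obtain ⟨ht1', ht2, _⟩ := hsub t ht
        rw [hone s hs1, hone t ht1']
        have hst' : (s:ℝ) ≤ (t:ℝ) := hst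
        exact hmono hs2 ht2 (pr_mono (by linarith))
      · right
        refine ⟨?_, ?_, ?_⟩
        · intro s hs t ht hst
          obtain ⟨hs1, hs2, _⟩ := hsub s hs
          obtain ⟨ht1', ht2, _⟩ := hsub t ht
          rw [hone s hs1, hone t ht1']
          have hst' : (s:ℝ) ≤ (t:ℝ) := hst
          exact hanti hs2 ht2 (pr_mono (by linarith))
        · intro t ht
          have hle : (t:ℝ) ≤ 1/2 := by rw [ht]; linarith
          rw [hone t hle]
          apply hL
          rw [pr_coe (by rw [ht]; linarith) (by rw [ht]; linarith), ht]
          ring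
        · intro t ht
          have hle : (t:ℝ) ≤ 1/2 := by rw [ht]; linarith
          rw [hone t hle]
          apply hR
          rw [pr_coe (by rw [ht]; linarith) (by rw [ht]; linarith), ht]
          ring
    · rw [wr i (by omega), wr (i+1) (by omega), (by omega : i + 1 - n = (i - n) + 1)]
      have hj : i - n < m := by omega
      have hvj0 : 0 ≤ v (i - n) := u_nonneg hv hv0 (by omega)
      have hvj1 : v (i - n + 1) ≤ 1 := u_le_one hv hv1 (by omega)
      have hvjn : v (i - n) < v (i - n + 1) := hv (i - n) hj
      have hsub : ∀ t : I, t ∈ {t : I | (v (i-n) + 1) / 2 ≤ (t:ℝ) ∧ (t:ℝ) ≤ (v (i-n+1) + 1)/2} →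
          1/2 ≤ (t:ℝ) ∧ pr (2*(t:ℝ)-1) ∈ {t : I | v (i-n) ≤ (t:ℝ) ∧ (t:ℝ) ≤ v (i-n+1)} ∧
          ((pr (2*(t:ℝ)-1) : I) : ℝ) = 2*(t:ℝ)-1 := by
        rintro t ⟨ht1, ht2⟩
        have hle : 1/2 ≤ (t:ℝ) := by linarith
        have hco : ((pr (2*(t:ℝ)-1) : I) : ℝ) = 2*(t:ℝ)-1 :=
          pr_coe (by linarith) (by linarith)
        exact ⟨hle, ⟨by rw [hco]; linarith, by rw [hco]; linarith⟩, hco⟩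
      rcases hpb (i - n) hj with hmono | ⟨hanti, hL, hR⟩
      · left
        intro s hs t ht hst
        obtain ⟨hs1, hs2, _⟩ := hsub s hs
        obtain ⟨ht1', ht2, _⟩ := hsub t ht
        rw [htwo s hs1, htwo t ht1']
        have hst' : (s:ℝ) ≤ (t:ℝ) := hst
        exact hmono hs2 ht2 (pr_mono (by linarith))
      · right
        refine ⟨?_, ?_, ?_⟩
        · intro s hs t ht hst
          obtain ⟨hs1, hs2, _⟩ := hsub s hs
          obtain ⟨ht1', ht2, _⟩ := hsub t ht
          rw [htwo s hs1, htwo t ht1']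
          have hst' : (s:ℝ) ≤ (t:ℝ) := hst
          exact hanti hs2 ht2 (pr_mono (by linarith))
        · intro t ht
          have hle : 1/2 ≤ (t:ℝ) := by rw [ht]; linarith
          rw [htwo t hle]
          apply hL
          rw [pr_coe (by rw [ht]; linarith) (by rw [ht]; linarith), ht]
          ring
        · intro t ht
          have hle : 1/2 ≤ (t:ℝ) := by rw [ht]; linarith
          rw [htwo t hle]
          apply hR
          rw [pr_coe (by rw [ht]; linarith) (by rw [ht]; linarith), ht]
          ring

lemma reparam_mem {a : I → I} (ha : a ∈ Pp) (ρ : I → I) (hρc : Continuous ρ)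
    (hρm : Monotone ρ) (hρs : Function.Surjective ρ) : a ∘ ρ ∈ Pp := by
  obtain ⟨hac, n, hn, u, hu0, hu1, hu, hpa⟩ := ha
  have hρ0 : ρ 0 = 0 := by
    obtain ⟨t, ht⟩ := hρs 0
    have h1 : ρ 0 ≤ ρ t := hρm (Subtype.coe_le_coe.mp (by simpa using t.2.1))
    have h2 : (0:I) ≤ ρ 0 := Subtype.coe_le_coe.mp (by simpa using (ρ 0).2.1)
    rw [ht] at h1
    exact le_antisymm h1 h2
  have hρ1 : ρ 1 = 1 := by
    obtain ⟨t, ht⟩ := hρs 1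
    have h1 : ρ t ≤ ρ 1 := hρm (Subtype.coe_le_coe.mp (by simpa using t.2.2))
    have h2 : ρ 1 ≤ 1 := Subtype.coe_le_coe.mp (by simpa using (ρ 1).2.2)
    rw [ht] at h1
    exact le_antisymm h2 h1
  have hpr0 : pr (0:ℝ) = 0 := Subtype.ext (by rw [pr_coe le_rfl zero_le_one]; norm_num)
  have hpr1 : pr (1:ℝ) = 1 := Subtype.ext (by rw [pr_coe zero_le_one le_rfl]; norm_num)
  set v : ℕ → ℝ := fun i => if i = 0 then 0 else if n ≤ i then 1
    else ((Classical.choose (hρs (pr (u i))) : I) : ℝ) with hvd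
  have hvmem : ∀ i, v i ∈ Icc (0:ℝ) 1 := by
    intro i
    simp only [hvd]
    split_ifs
    · norm_num
    · norm_num
    · exact (Classical.choose (hρs (pr (u i)))).2
  have hvρ : ∀ i ≤ n, ρ (pr (v i)) = pr (u i) := by
    intro i hi
    by_cases h0 : i = 0
    · subst h0
      have hv00 : v 0 = 0 := by simp [hvd]
      rw [hv00, hu0, hpr0]
      exact hρ0
    · by_cases hni : n ≤ i
      · have hein : i = n := le_antisymm hi hni
        subst hein
        have hv11 : v i = 1 := by simp [hvd, h0, hni]
        rw [hv11, hu1, hpr1]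
        exact hρ1
      · have hvi : v i = ((Classical.choose (hρs (pr (u i))) : I) : ℝ) := by
          simp [hvd, h0, hni]
        rw [hvi, pr_val]
        exact Classical.choose_spec (hρs (pr (u i)))
  have hvc : ∀ i, ((pr (v i) : I) : ℝ) = v i := fun i => pr_coe (hvmem i).1 (hvmem i).2
  have hustrict : ∀ i < n, v i < v (i+1) := by
    intro i hi
    by_contra hcon
    push_neg at hcon
    have h1 : ρ (pr (v (i+1))) ≤ ρ (pr (v i)) := hρm (pr_mono hcon)
    rw [hvρ (i+1) (by omega), hvρ i (by omega)] at h1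
    have h2 : u (i+1) ≤ u i := by
      have h3 := Subtype.coe_le_coe.mpr h1
      rwa [pr_coe (u_nonneg hu hu0 (by omega)) (u_le_one hu hu1 (by omega)),
        pr_coe (u_nonneg hu hu0 (by omega)) (u_le_one hu hu1 (by omega))] at h3
    exact absurd (hu i hi) (not_lt.mpr h2)
  refine ⟨hac.comp hρc, n, hn, v, by simp [hvd], ?_, hustrict, ?_⟩
  · have hne : ¬ n = 0 := by omega
    simp [hvd, hne]
  · intro i hi
    have hmemset : ∀ t : I, t ∈ {t : I | v i ≤ (t:ℝ) ∧ (t:ℝ) ≤ v (i+1)} →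
        ρ t ∈ {t : I | u i ≤ (t:ℝ) ∧ (t:ℝ) ≤ u (i+1)} := by
      rintro t ⟨ht1, ht2⟩
      have hl : pr (v i) ≤ t := Subtype.coe_le_coe.mp (by rw [hvc i]; exact ht1)
      have hr' : t ≤ pr (v (i+1)) := Subtype.coe_le_coe.mp (by rw [hvc (i+1)]; exact ht2)
      have h1 := hρm hl
      have h2 := hρm hr'
      rw [hvρ i (by omega)] at h1
      rw [hvρ (i+1) (by omega)] at h2
      constructor
      · have h3 := Subtype.coe_le_coe.mpr h1
        rwa [pr_coe (u_nonneg hu hu0 (by omega)) (u_le_one hu hu1 (by omega))] at h3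
      · have h3 := Subtype.coe_le_coe.mpr h2
        rwa [pr_coe (u_nonneg hu hu0 (by omega)) (u_le_one hu hu1 (by omega))] at h3
    rcases hpa i hi with hmono | ⟨hanti, hL, hR⟩
    · left
      intro s hs t ht hst
      exact hmono (hmemset s hs) (hmemset t ht) (hρm hst)
    · right
      refine ⟨fun s hs t ht hst => hanti (hmemset s hs) (hmemset t ht) (hρm hst), ?_, ?_⟩
      · intro t ht
        have htv : t = pr (v i) := Subtype.ext (by rw [hvc i, ht])
        show a (ρ t) = 1
        rw [htv, hvρ i (by omega)]
        exact hL _ (pr_coe (u_nonneg hu hu0 (by omega)) (u_le_one hu hu1 (by omega)))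
      · intro t ht
        have htv : t = pr (v (i+1)) := Subtype.ext (by rw [hvc (i+1), ht])
        show a (ρ t) = 0
        rw [htv, hvρ (i+1) (by omega)]
        exact hR _ (pr_coe (u_nonneg hu hu0 (by omega)) (u_le_one hu hu1 (by omega)))

lemma Pp_c : IsCStructure Pp where
  cont := fun _ ha => ha.1
  const_src := fun _ _ => mono_mem continuous_const monotone_const
  const_tgt := fun _ _ => mono_mem continuous_const monotone_const
  concat := fun _ ha _ hb hab => concat_mem hab ha hb
  reparam := fun _ ha ρ h1 h2 h3 => reparam_mem ha ρ h1 h2 h3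

/-- The growing-siphon interval `c_S𝕀`: the c-structure generated by all increasing
continuous maps together with the reversion `r(t) = 1 - t`. -/
def cSgen : Set (I → I) :=
  ⋂₀ {S : Set (I → I) | IsCStructure S ∧
    {a : I → I | Continuous a ∧ Monotone a} ⊆ S ∧ (unitInterval.symm : I → I) ∈ S}

/-- The controlled paths of the growing siphon are exactly the piecewise monotone paths whose
decreasing pieces go (antitonically) from `1` all the way down to `0`. -/
theorem cSgen_characterisation :
    cSgen = {a : I → I | Continuous a ∧ ∃ n : ℕ, 0 < n ∧ ∃ u : ℕ → ℝ,
      u 0 = 0 ∧ u n = 1 ∧ (∀ i < n, u i < u (i + 1)) ∧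
      ∀ i < n,
        MonotoneOn a {t : I | u i ≤ (t : ℝ) ∧ (t : ℝ) ≤ u (i + 1)} ∨
        (AntitoneOn a {t : I | u i ≤ (t : ℝ) ∧ (t : ℝ) ≤ u (i + 1)} ∧
          (∀ t : I, (t : ℝ) = u i → a t = 1) ∧
          (∀ t : I, (t : ℝ) = u (i + 1) → a t = 0))} := by
  apply Set.Subset.antisymm
  · intro x hx
    exact hx Pp ⟨Pp_c, fun b hb => mono_mem hb.1 hb.2, symm_mem⟩
  · rintro a ⟨hc, n, hn, u, h0, h1, hu, hp⟩
    simp only [cSgen, Set.mem_sInter, Set.mem_setOf_eq]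
    rintro S ⟨h1S, h2S, h3S⟩
    exact dir2 h1S h2S h3S a hc n hn u h0 h1 hu hp
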